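/- Let d, m, n be positive integers with dm ≤ n < 2^m. Then there exist dm vectors v₁, …, v_{dm} in F₂^n such that for any two distinct vectors x, y ∈ F₂^n each of Hamming weight at most d, there is an index i with x · v_i ≠ y · v_i, where · denotes the standard bilinear form over F₂. -/

import Mathlib

lemma vandermonde_aux {F : Type*} [Field F] {s : ℕ} (hs : 0 < s) (a : Fin s → F)
    (ha : Function.Injective a) (h0 : ∀ j, a j ≠ 0)
    (h : ∀ e : ℕ, 1 ≤ e → e ≤ s → ∑ j, a j ^ e = 0) : False := by
  set M : Matrix (Fin s) (Fin s) F := Matrix.of fun e j : Fin s => a j ^ ((e : ℕ) + 1) with hM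
  have hT : M.transpose = Matrix.diagonal a * Matrix.vandermonde a := by
    ext j e
    rw [Matrix.transpose_apply, Matrix.diagonal_mul, Matrix.vandermonde_apply]
    simp [hM, pow_succ, mul_comm]
  have hdet : M.det ≠ 0 := by
    rw [← Matrix.det_transpose, hT, Matrix.det_mul, Matrix.det_diagonal,
      Matrix.det_vandermonde]
    refine mul_ne_zero (Finset.prod_ne_zero_iff.mpr fun j _ => h0 j) ?_
    refine Finset.prod_ne_zero_iff.mpr fun i _ => Finset.prod_ne_zero_iff.mpr fun j hj => ?_
    have hij : i < j := Finset.mem_Ioi.mp hj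
    exact sub_ne_zero_of_ne fun hh => absurd (ha hh) hij.ne'
  have h1 : M.mulVec (fun _ => 1) = 0 := by
    funext e
    simp only [Matrix.mulVec, dotProduct, hM, Matrix.of_apply, mul_one, Pi.zero_apply]
    exact h ((e : ℕ) + 1) (Nat.le_add_left 1 e) (Nat.succ_le_of_lt e.isLt)
  have := congrArg (fun w => M⁻¹.mulVec w) h1
  simp only [Matrix.mulVec_mulVec, Matrix.nonsing_inv_mul M (isUnit_iff_ne_zero.mpr hdet),
    Matrix.one_mulVec, Matrix.mulVec_zero] at this
  exact one_ne_zero (congrFun this ⟨0, hs⟩)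

theorem exists_separating_vectors (d m n : ℕ) (hd : 0 < d) (hm : 0 < m)
    (h1 : d * m ≤ n) (h2 : n < 2 ^ m) :
    ∃ v : Fin (d * m) → (Fin n → ZMod 2),
      ∀ x y : Fin n → ZMod 2, x ≠ y →
        (Finset.univ.filter fun j => x j ≠ 0).card ≤ d →
        (Finset.univ.filter fun j => y j ≠ 0).card ≤ d →
        ∃ i : Fin (d * m), (∑ j, x j * v i j) ≠ ∑ j, y j * v i j := by
  classical
  haveI : Fintype (GaloisField 2 m) := Fintype.ofFinite _
  have hcard : Fintype.card (GaloisField 2 m) = 2 ^ m := by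
    rw [← Nat.card_eq_fintype_card]; exact GaloisField.card 2 m hm.ne'
  have hcardu : Fintype.card (Fin n) ≤ Fintype.card (GaloisField 2 m)ˣ := by
    rw [Fintype.card_units, hcard, Fintype.card_fin]
    omega
  obtain ⟨e⟩ : Nonempty (Fin n ↪ (GaloisField 2 m)ˣ) :=
    Function.Embedding.nonempty_of_card_le hcardu
  set a : Fin n → GaloisField 2 m := fun j => (e j : GaloisField 2 m) with haf
  have ha : Function.Injective a := fun i j hij => e.injective (Units.ext hij)
  have ha0 : ∀ j, a j ≠ 0 := fun j => (e j).ne_zero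
  have hrank : Module.finrank (ZMod 2) (GaloisField 2 m) = m := GaloisField.finrank 2 hm.ne'
  set b : Module.Basis (Fin m) (ZMod 2) (GaloisField 2 m) :=
    (Module.finBasis (ZMod 2) (GaloisField 2 m)).reindex (finCongr hrank) with hb
  refine ⟨fun i j => b.repr (a j ^ (2 * ((finProdFinEquiv.symm i).1 : ℕ) + 1))
    ((finProdFinEquiv.symm i).2), ?_⟩
  intro x y hxy hx hy
  by_contra hcon
  push_neg at hcon
  set z : Fin n → ZMod 2 := fun j => x j - y j with hz
  have hone : ∀ w : ZMod 2, w ≠ 0 → w = 1 := by decide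
  -- all odd power sums vanish
  have hodd : ∀ k : Fin d, ∑ j, z j • a j ^ (2 * (k : ℕ) + 1) = 0 := by
    intro k
    apply b.repr.injective
    rw [map_zero]
    ext t
    have hct := hcon (finProdFinEquiv (k, t))
    rw [Equiv.symm_apply_apply] at hct
    have hzero : ∑ j, z j * b.repr (a j ^ (2 * (k : ℕ) + 1)) t = 0 := by
      have h' : ∑ j, (x j - y j) * b.repr (a j ^ (2 * (k : ℕ) + 1)) t = 0 := by
        rw [Finset.sum_congr rfl fun j _ => sub_mul (x j) (y j) _,
          Finset.sum_sub_distrib, hct, sub_self]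
      simpa [hz] using h'
    rw [map_sum]
    simpa [Finsupp.smul_apply] using hzero
  -- all power sums up to 2d vanish
  have hpow : ∀ u : ℕ, 1 ≤ u → u ≤ 2 * d → ∑ j, z j • a j ^ u = 0 := by
    intro u
    induction u using Nat.strong_induction_on with
    | _ u ih =>
      intro hu1 hu2
      rcases Nat.even_or_odd u with ⟨c, hc⟩ | ⟨k, hk⟩
      · have hc1 : 1 ≤ c := by omega
        have hrec := ih c (by omega) hc1 (by omega)
        have hsq : ∑ j, z j • a j ^ u = (∑ j, z j • a j ^ c) ^ 2 := by
          rw [CharTwo.sum_sq]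
          refine Finset.sum_congr rfl fun j _ => ?_
          rw [smul_pow, ZMod.pow_card, ← pow_mul]
          congr 2
          omega
        rw [hsq, hrec]
        exact zero_pow two_ne_zero
      · have hk2 : k < d := by omega
        have := hodd ⟨k, hk2⟩
        simpa [hk] using this
  -- support of z
  set T : Finset (Fin n) := Finset.univ.filter fun j => z j ≠ 0 with hT
  have hTsum : ∀ u : ℕ, ∑ j, z j • a j ^ u = ∑ j ∈ T, a j ^ u := by
    intro u
    rw [hT, Finset.sum_filter]
    refine Finset.sum_congr rfl fun j _ => ?_
    by_cases hj : z j = 0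
    · simp [hj]
    · rw [if_pos hj, hone _ hj, one_smul]
  have hTne : T.Nonempty := by
    by_contra hTe
    apply hxy
    funext j
    have hj : j ∉ T := fun hj => hTe ⟨j, hj⟩
    simp only [hT, Finset.mem_filter, Finset.mem_univ, true_and, not_not] at hj
    exact sub_eq_zero.mp hj
  have hTcard : T.card ≤ 2 * d := by
    have hsub : T ⊆ (Finset.univ.filter fun j => x j ≠ 0) ∪
        (Finset.univ.filter fun j => y j ≠ 0) := by
      intro j hj
      have hzj : z j ≠ 0 := (Finset.mem_filter.mp hj).2
      simp only [Finset.mem_union, Finset.mem_filter, Finset.mem_univ, true_and]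
      by_contra hc
      push_neg at hc
      exact hzj (by simp [hz, hc.1, hc.2])
    calc T.card ≤ _ := Finset.card_le_card hsub
      _ ≤ _ := Finset.card_union_le _ _
      _ ≤ 2 * d := by omega
  have hs0 : 0 < T.card := Finset.card_pos.mpr hTne
  set eqv := T.equivFin with heq
  refine vandermonde_aux hs0 (fun i => a ((eqv.symm i : T) : Fin n))
    (fun i j hij => eqv.symm.injective (Subtype.ext (ha hij))) (fun i => ha0 _)
    (fun u hu1 hu2 => ?_)
  have hsum0 : ∑ j ∈ T, a j ^ u = 0 := by
    rw [← hTsum]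
    exact hpow u hu1 (le_trans hu2 hTcard)
  rw [← hsum0, ← Finset.sum_attach T (fun j => a j ^ u)]
  exact Fintype.sum_equiv eqv.symm _ _ fun i => rfl
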